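/- arXiv:math/0406424 — 2 statements merged into one kernel-verified Lean document; each statement's English description precedes it below -/
import Mathlib

section
/- Let N ≥ 3 be an integer, γ ≥ 3/2, and let Γ_N be the set of vectors of length N whose entries take values in a fixed finite set D of cardinality at most N^{1/2}. For θ' ∈ Γ_N let #(θ') be the number of maximal constant runs of θ'. Then ∑_{θ'∈Γ_N} exp(-γ (log N) #(θ')) ≤ 1. -/
open Finset Real

private lemma fiber_card_le (N : ℕ) (hN : 3 ≤ N) (D : Type*) [Fintype D] [DecidableEq D]
    (B : (Fin N → D) → Finset (Fin (N - 1)))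
    (hB : ∀ (f : Fin N → D) (i : Fin (N - 1)),
      i ∈ B f ↔ f ⟨(i : ℕ), Nat.lt_of_lt_of_le i.isLt (Nat.sub_le N 1)⟩ ≠ f ⟨(i : ℕ) + 1, Nat.add_lt_of_lt_sub i.isLt⟩)
    (S : Finset (Fin (N - 1))) :
    ((Finset.univ : Finset (Fin N → D)).filter (fun f => B f = S)).card
      ≤ Fintype.card D ^ (S.card + 1) := by
  classical
  have h0 : 0 < N := by omega
  have hcard : Fintype.card (Option S → D) = Fintype.card D ^ (S.card + 1) := by
    rw [Fintype.card_fun, Fintype.card_option, Fintype.card_coe]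
  rw [← hcard, ← Finset.card_univ]
  apply Finset.card_le_card_of_injOn
    (fun f => fun o : Option S =>
      Option.rec (f ⟨0, h0⟩) (fun i => f ⟨(i : ℕ) + 1, by have := i.1.isLt; omega⟩) o)
  · intro f _; exact Finset.mem_univ _
  · intro f hf g hg hfg
    simp only [Finset.coe_filter, Set.mem_setOf_eq, Finset.mem_univ, true_and] at hf hg
    suffices h : ∀ k (hk : k < N), f ⟨k, hk⟩ = g ⟨k, hk⟩ by
      funext x
      have := h x.1 x.2
      simpa using this
    intro k
    induction k with
    | zero => intro hk; exact congrFun hfg none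
    | succ j ih =>
      intro hk
      have hj' : j < N - 1 := by omega
      by_cases hj : (⟨j, hj'⟩ : Fin (N - 1)) ∈ S
      · exact congrFun hfg (some ⟨⟨j, hj'⟩, hj⟩)
      · have hnf : (⟨j, hj'⟩ : Fin (N - 1)) ∉ B f := hf ▸ hj
        have hng : (⟨j, hj'⟩ : Fin (N - 1)) ∉ B g := hg ▸ hj
        have h1 : f ⟨j, by omega⟩ = f ⟨j + 1, hk⟩ :=
          not_not.mp (fun h => hnf ((hB f ⟨j, hj'⟩).mpr h))
        have h2 : g ⟨j, by omega⟩ = g ⟨j + 1, hk⟩ :=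
          not_not.mp (fun h => hng ((hB g ⟨j, hj'⟩).mpr h))
        rw [← h1, ← h2]
        exact ih (by omega)

/-- Lemma 1 of Kolaczyk–Nowak: for `N ≥ 3`, `γ ≥ 3/2`, and vectors of length `N`
with entries in a set `D` of cardinality at most `√N`, summing
`exp(-γ (log N) · #(θ'))` over all such vectors, where `#(θ')` is the number of
maximal constant runs, gives at most `1`. -/
theorem kraft_inequality_constant_runs (N : ℕ) (hN : 3 ≤ N) (γ : ℝ) (hγ : 3 / 2 ≤ γ)
    (D : Type*) [Fintype D] [DecidableEq D]
    (hD : (Fintype.card D : ℝ) ≤ Real.sqrt N) :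
    ∑ f : Fin N → D,
      Real.exp (-γ * Real.log N *
        (1 + ((Finset.univ : Finset (Fin (N - 1))).filter
          (fun i : Fin (N - 1) => f ⟨(i : ℕ), by have := i.isLt; omega⟩
                  ≠ f ⟨(i : ℕ) + 1, by have := i.isLt; omega⟩)).card)) ≤ 1 := by
  classical
  have hN1 : (1 : ℝ) < N := by exact_mod_cast (by omega : 1 < N)
  have hN0 : (0 : ℝ) < N := by linarith
  set B : (Fin N → D) → Finset (Fin (N - 1)) := fun f =>
    (Finset.univ : Finset (Fin (N - 1))).filter
      (fun i : Fin (N - 1) => f ⟨(i : ℕ), by have := i.isLt; omega⟩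
            ≠ f ⟨(i : ℕ) + 1, by have := i.isLt; omega⟩) with hBdef
  have hB : ∀ (f : Fin N → D) (i : Fin (N - 1)),
      i ∈ B f ↔ f ⟨(i : ℕ), by have := i.isLt; omega⟩ ≠ f ⟨(i : ℕ) + 1, by have := i.isLt; omega⟩ := by
    intro f i
    simp [hBdef]
  -- key per-cardinality bound
  have key : ∀ d : ℕ, (Fintype.card D : ℝ) ^ (d + 1) * Real.exp (-γ * Real.log N * (1 + d))
      ≤ (1 / (N : ℝ)) ^ (d + 1) := by
    intro d
    have hsq : Real.sqrt N = (N : ℝ) ^ ((1 : ℝ) / 2) := Real.sqrt_eq_rpow _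
    have h1 : (Fintype.card D : ℝ) ^ (d + 1) ≤ ((N : ℝ) ^ ((1 : ℝ) / 2)) ^ (d + 1) :=
      pow_le_pow_left₀ (by positivity) (hsq ▸ hD) _
    have h2 : Real.exp (-γ * Real.log N * (1 + d)) = (N : ℝ) ^ (-γ * (1 + (d : ℝ))) := by
      rw [Real.rpow_def_of_pos hN0]
      exact congrArg Real.exp (by ring)
    have h3 : ((N : ℝ) ^ ((1 : ℝ) / 2)) ^ (d + 1) = (N : ℝ) ^ (((1 : ℝ) / 2) * ((d : ℝ) + 1)) := by
      rw [← Real.rpow_natCast ((N : ℝ) ^ ((1 : ℝ) / 2)) (d + 1), ← Real.rpow_mul hN0.le]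
      push_cast
      ring_nf
    have h4 : (N : ℝ) ^ (((1 : ℝ) / 2) * ((d : ℝ) + 1)) * (N : ℝ) ^ (-γ * (1 + (d : ℝ)))
        = (N : ℝ) ^ (((1 : ℝ) / 2) * ((d : ℝ) + 1) + (-γ * (1 + (d : ℝ)))) :=
      (Real.rpow_add hN0 _ _).symm
    have h5 : (N : ℝ) ^ (((1 : ℝ) / 2) * ((d : ℝ) + 1) + (-γ * (1 + (d : ℝ))))
        ≤ (N : ℝ) ^ (-((d : ℝ) + 1)) := by
      apply Real.rpow_le_rpow_of_exponent_le hN1.le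
      have hd : (0 : ℝ) ≤ (d : ℝ) := Nat.cast_nonneg d
      nlinarith
    have h6 : (N : ℝ) ^ (-((d : ℝ) + 1)) = (1 / (N : ℝ)) ^ (d + 1) := by
      rw [Real.rpow_neg hN0.le, one_div, inv_pow]
      congr 1
      rw [← Real.rpow_natCast (N : ℝ) (d + 1)]
      push_cast
      ring_nf
    calc (Fintype.card D : ℝ) ^ (d + 1) * Real.exp (-γ * Real.log N * (1 + d))
        ≤ ((N : ℝ) ^ ((1 : ℝ) / 2)) ^ (d + 1) * Real.exp (-γ * Real.log N * (1 + d)) := by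
          apply mul_le_mul_of_nonneg_right h1 (Real.exp_nonneg _)
      _ = (N : ℝ) ^ (((1 : ℝ) / 2) * ((d : ℝ) + 1) + (-γ * (1 + (d : ℝ)))) := by
          rw [h2, h3, h4]
      _ ≤ (N : ℝ) ^ (-((d : ℝ) + 1)) := h5
      _ = (1 / (N : ℝ)) ^ (d + 1) := h6
  -- bound on (1 + 1/N)^(N-1)
  have hb : (1 / (N : ℝ) + 1) ^ (N - 1) ≤ (N : ℝ) := by
    have h1 : (1 / (N : ℝ) + 1) ^ (N - 1) ≤ (Real.exp (1 / N)) ^ (N - 1) :=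
      pow_le_pow_left₀ (by positivity) (Real.add_one_le_exp _) _
    rw [← Real.exp_nat_mul] at h1
    have h2 : ((N - 1 : ℕ) : ℝ) * (1 / N) ≤ 1 := by
      rw [mul_one_div, div_le_one hN0]
      exact_mod_cast Nat.sub_le N 1
    have h3 : Real.exp (((N - 1 : ℕ) : ℝ) * (1 / N)) ≤ Real.exp 1 := Real.exp_le_exp.mpr h2
    have h4 : Real.exp 1 ≤ 3 := by
      have := Real.exp_one_lt_d9
      linarith
    have h5 : (3 : ℝ) ≤ N := by exact_mod_cast hN
    linarith
  calc ∑ f : Fin N → D, Real.exp (-γ * Real.log N * (1 + ((B f).card : ℝ)))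
      = ∑ S ∈ (Finset.univ : Finset (Fin (N - 1))).powerset,
          ∑ f ∈ Finset.univ.filter (fun f => B f = S),
            Real.exp (-γ * Real.log N * (1 + ((B f).card : ℝ))) :=
        (Finset.sum_fiberwise_of_maps_to
          (fun f _ => Finset.mem_powerset.mpr (Finset.subset_univ _)) _).symm
    _ ≤ ∑ S ∈ (Finset.univ : Finset (Fin (N - 1))).powerset, (1 / (N : ℝ)) ^ (S.card + 1) := by
        apply Finset.sum_le_sum
        intro S _
        have hcongr : ∑ f ∈ Finset.univ.filter (fun f => B f = S),
            Real.exp (-γ * Real.log N * (1 + ((B f).card : ℝ)))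
            = ((Finset.univ.filter (fun f : Fin N → D => B f = S)).card : ℝ)
              * Real.exp (-γ * Real.log N * (1 + (S.card : ℝ))) := by
          rw [Finset.sum_congr rfl (fun f hf => by rw [(Finset.mem_filter.mp hf).2]),
            Finset.sum_const, nsmul_eq_mul]
        rw [hcongr]
        have hcard : ((Finset.univ.filter (fun f : Fin N → D => B f = S)).card : ℝ)
            ≤ (Fintype.card D : ℝ) ^ (S.card + 1) := by
          have := fiber_card_le N hN D B hB S
          exact_mod_cast this
        calc ((Finset.univ.filter (fun f : Fin N → D => B f = S)).card : ℝ)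
              * Real.exp (-γ * Real.log N * (1 + (S.card : ℝ)))
            ≤ (Fintype.card D : ℝ) ^ (S.card + 1)
              * Real.exp (-γ * Real.log N * (1 + (S.card : ℝ))) :=
              mul_le_mul_of_nonneg_right hcard (Real.exp_nonneg _)
          _ ≤ (1 / (N : ℝ)) ^ (S.card + 1) := key S.card
    _ = ∑ j ∈ Finset.range ((N - 1) + 1), ((N - 1).choose j : ℝ) * (1 / (N : ℝ)) ^ (j + 1) := by
        rw [Finset.sum_powerset]
        rw [Finset.card_univ, Fintype.card_fin]
        apply Finset.sum_congr rfl
        intro j hj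
        rw [Finset.sum_congr rfl
          (fun t ht => by rw [(Finset.mem_powersetCard.mp ht).2]),
          Finset.sum_const, nsmul_eq_mul, Finset.card_powersetCard, Finset.card_univ,
          Fintype.card_fin]
    _ = (1 / (N : ℝ)) * ∑ j ∈ Finset.range ((N - 1) + 1),
          (1 / (N : ℝ)) ^ j * 1 ^ ((N - 1) - j) * ((N - 1).choose j : ℝ) := by
        rw [Finset.mul_sum]
        apply Finset.sum_congr rfl
        intro j hj
        ring
    _ = (1 / (N : ℝ)) * (1 / (N : ℝ) + 1) ^ (N - 1) := by rw [← add_pow]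
    _ ≤ (1 / (N : ℝ)) * N := by
        apply mul_le_mul_of_nonneg_left hb (by positivity)
    _ = 1 := by field_simp
end

section
/- If X = (X₀,...,X_{N-1}) are independent Poisson random variables with means θ₀,...,θ_{N-1} > 0 and N = 2^J, then the joint pmf factors as p(X|θ) = p(X_{0,0}|θ_{0,0}) ∏_{j=0}^{J-1} ∏_{k=0}^{2^j-1} Binomial-pmf(X_{j+1,2k}; X_{j,k}, ω_{j,k}), where X_{j,k} = ∑_{i: ⌊i 2^j / N⌋ = k} X_i, θ_{j,k} is defined analogously from θ, ω_{j,k} = θ_{j+1,2k}/θ_{j,k}, and p(X_{0,0}|θ_{0,0}) is the Poisson(θ_{0,0}) pmf. -/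
open Finset Real

/-- The dyadic block of indices `i ∈ {0,…,N-1}` with `⌊i 2^j / N⌋ = k`. -/
def dyadicBlock (N j k : ℕ) : Finset (Fin N) :=
  Finset.univ.filter (fun i => (i : ℕ) * 2 ^ j / N = k)

/-- Aggregation of a vector over the dyadic block at scale `j`, position `k`. -/
def dyadicAgg {N : ℕ} {M : Type*} [AddCommMonoid M] (f : Fin N → M) (j k : ℕ) : M :=
  ∑ i ∈ dyadicBlock N j k, f i

lemma block_cond (J j : ℕ) (hj : j ≤ J) (i : ℕ) : i * 2 ^ j / 2 ^ J = i / 2 ^ (J - j) := by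
  conv_lhs => rw [show (2:ℕ) ^ J = 2 ^ (J - j) * 2 ^ j by rw [← pow_add]; congr 1; omega]
  exact Nat.mul_div_mul_right i (2 ^ (J - j)) (pow_pos (by norm_num : (0:ℕ) < 2) j)

-- singleton at scale J
lemma dyadicAgg_top {M : Type*} [AddCommMonoid M] (J : ℕ) (f : Fin (2 ^ J) → M) (i : Fin (2 ^ J)) :
    dyadicAgg f J (i : ℕ) = f i := by
  have hb : dyadicBlock (2 ^ J) J (i : ℕ) = {i} := by
    ext a
    simp only [dyadicBlock, Finset.mem_filter, Finset.mem_univ, true_and, Finset.mem_singleton]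
    rw [Nat.mul_div_cancel _ (pow_pos (by norm_num : (0:ℕ) < 2) J)]
    exact ⟨fun h => Fin.ext h, fun h => by rw [h]⟩
  rw [dyadicAgg, hb, Finset.sum_singleton]

-- split
lemma dyadicAgg_split {M : Type*} [AddCommMonoid M] (J : ℕ) (f : Fin (2 ^ J) → M)
    (j k : ℕ) (hj : j < J) :
    dyadicAgg f j k = dyadicAgg f (j + 1) (2 * k) + dyadicAgg f (j + 1) (2 * k + 1) := by
  have hd : J - j = (J - (j + 1)) + 1 := by omega
  have h2 : ∀ i : ℕ, i / 2 ^ (J - j) = i / 2 ^ (J - (j+1)) / 2 := by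
    intro i
    rw [hd, pow_succ, Nat.div_div_eq_div_mul]
  have hcond : ∀ i : Fin (2 ^ J), ((i:ℕ) * 2 ^ j / 2 ^ J = k ↔
      ((i:ℕ) * 2 ^ (j+1) / 2 ^ J = 2 * k ∨ (i:ℕ) * 2 ^ (j+1) / 2 ^ J = 2 * k + 1)) := by
    intro i
    rw [block_cond J j (by omega), block_cond J (j+1) (by omega), h2]
    omega
  have hdisj : Disjoint (dyadicBlock (2 ^ J) (j+1) (2*k)) (dyadicBlock (2 ^ J) (j+1) (2*k+1)) := by
    unfold dyadicBlock
    rw [Finset.disjoint_filter]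
    intro a _ h1 h2
    omega
  have hun : dyadicBlock (2 ^ J) j k
      = dyadicBlock (2 ^ J) (j+1) (2*k) ∪ dyadicBlock (2 ^ J) (j+1) (2*k+1) := by
    ext a
    simp only [dyadicBlock, Finset.mem_filter, Finset.mem_univ, true_and, Finset.mem_union]
    exact hcond a
  rw [dyadicAgg, hun, Finset.sum_union hdisj]; rfl

-- positivity
lemma dyadicAgg_pos (J : ℕ) (θ : Fin (2 ^ J) → ℝ) (hθ : ∀ i, 0 < θ i)
    (j k : ℕ) (hj : j ≤ J) (hk : k < 2 ^ j) : 0 < dyadicAgg θ j k := by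
  have hi0 : k * 2 ^ (J - j) < 2 ^ J := by
    calc k * 2 ^ (J - j) < 2 ^ j * 2 ^ (J - j) := by
          exact (Nat.mul_lt_mul_right (pow_pos (by norm_num : (0:ℕ) < 2) _)).mpr hk
    _ = 2 ^ J := by rw [← pow_add]; congr 1; omega
  have hmem : (⟨k * 2 ^ (J - j), hi0⟩ : Fin (2 ^ J)) ∈ dyadicBlock (2 ^ J) j k := by
    simp only [dyadicBlock, Finset.mem_filter, Finset.mem_univ, true_and]
    rw [block_cond J j hj]
    exact Nat.mul_div_cancel _ (pow_pos (by norm_num : (0:ℕ) < 2) _)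
  exact Finset.sum_pos' (fun i _ => (hθ i).le) ⟨_, hmem, hθ _⟩

lemma poisson_key (a b : ℝ) (ha : 0 < a) (hb : 0 < b) (m n : ℕ) :
    (Real.exp (-a) * a ^ m / (Nat.factorial m : ℝ)) *
      (Real.exp (-b) * b ^ n / (Nat.factorial n : ℝ))
    = Real.exp (-(a + b)) * (a + b) ^ (m + n) / (Nat.factorial (m + n) : ℝ) *
        ((Nat.choose (m + n) m : ℝ) * (a / (a + b)) ^ m *
          (1 - a / (a + b)) ^ (m + n - m)) := by
  have hab : (0:ℝ) < a + b := by linarith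
  have h1 : 1 - a / (a + b) = b / (a + b) := by field_simp; ring
  have h2 : m + n - m = n := by omega
  have hch : ((m + n).choose m : ℝ) * (Nat.factorial m : ℝ) * (Nat.factorial n : ℝ)
      = (Nat.factorial (m + n) : ℝ) := by
    have := Nat.choose_mul_factorial_mul_factorial (Nat.le_add_right m n)
    rw [Nat.add_sub_cancel_left] at this
    exact_mod_cast this
  have hm : (Nat.factorial m : ℝ) ≠ 0 := Nat.cast_ne_zero.mpr (Nat.factorial_ne_zero m)
  have hn : (Nat.factorial n : ℝ) ≠ 0 := Nat.cast_ne_zero.mpr (Nat.factorial_ne_zero n)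
  have hc : ((m + n).choose m : ℝ) ≠ 0 :=
    Nat.cast_ne_zero.mpr (Nat.choose_pos (Nat.le_add_right m n)).ne'
  rw [h1, h2, neg_add, Real.exp_add, ← hch, div_pow, div_pow, pow_add]
  field_simp

lemma prodPairs {M : Type*} [CommMonoid M] (n : ℕ) (f : ℕ → M) :
    ∏ i ∈ Finset.range (2 * n), f i = ∏ k ∈ Finset.range n, (f (2 * k) * f (2 * k + 1)) := by
  induction n with
  | zero => simp
  | succ n ih =>
    rw [Nat.mul_succ, prod_range_succ, prod_range_succ, ih,
      prod_range_succ (fun k => f (2 * k) * f (2 * k + 1)) n, mul_assoc]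

lemma main_ind (J : ℕ) (θ : Fin (2 ^ J) → ℝ) (hθ : ∀ i, 0 < θ i) (x : Fin (2 ^ J) → ℕ) :
    ∀ L, L ≤ J →
    ∏ k ∈ Finset.range (2 ^ L),
        (Real.exp (-(dyadicAgg θ L k)) * (dyadicAgg θ L k) ^ (dyadicAgg x L k) /
          (Nat.factorial (dyadicAgg x L k) : ℝ))
      = (Real.exp (-(dyadicAgg θ 0 0)) * (dyadicAgg θ 0 0) ^ (dyadicAgg x 0 0) /
            (Nat.factorial (dyadicAgg x 0 0) : ℝ)) *
        ∏ j ∈ Finset.range L, ∏ k ∈ Finset.range (2 ^ j),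
          ((Nat.choose (dyadicAgg x j k) (dyadicAgg x (j + 1) (2 * k)) : ℝ) *
            (dyadicAgg θ (j + 1) (2 * k) / dyadicAgg θ j k) ^
              (dyadicAgg x (j + 1) (2 * k)) *
            (1 - dyadicAgg θ (j + 1) (2 * k) / dyadicAgg θ j k) ^
              (dyadicAgg x j k - dyadicAgg x (j + 1) (2 * k))) := by
  intro L
  induction L with
  | zero => intro _; simp
  | succ L ih =>
    intro hL
    have hL' : L < J := hL
    have key : ∏ k ∈ Finset.range (2 ^ (L + 1)),
        (Real.exp (-(dyadicAgg θ (L+1) k)) * (dyadicAgg θ (L+1) k) ^ (dyadicAgg x (L+1) k) /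
          (Nat.factorial (dyadicAgg x (L+1) k) : ℝ))
      = ∏ k ∈ Finset.range (2 ^ L),
          ((Real.exp (-(dyadicAgg θ L k)) * (dyadicAgg θ L k) ^ (dyadicAgg x L k) /
            (Nat.factorial (dyadicAgg x L k) : ℝ)) *
          ((Nat.choose (dyadicAgg x L k) (dyadicAgg x (L + 1) (2 * k)) : ℝ) *
            (dyadicAgg θ (L + 1) (2 * k) / dyadicAgg θ L k) ^
              (dyadicAgg x (L + 1) (2 * k)) *
            (1 - dyadicAgg θ (L + 1) (2 * k) / dyadicAgg θ L k) ^
              (dyadicAgg x L k - dyadicAgg x (L + 1) (2 * k)))) := by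
      rw [pow_succ, mul_comm (2 ^ L) 2, prodPairs]
      refine Finset.prod_congr rfl (fun k hk => ?_)
      rw [Finset.mem_range] at hk
      have ha : 0 < dyadicAgg θ (L+1) (2*k) :=
        dyadicAgg_pos J θ hθ (L+1) (2*k) hL' (by rw [pow_succ]; omega)
      have hb : 0 < dyadicAgg θ (L+1) (2*k+1) :=
        dyadicAgg_pos J θ hθ (L+1) (2*k+1) hL' (by rw [pow_succ]; omega)
      rw [dyadicAgg_split J θ L k hL', dyadicAgg_split J x L k hL']
      exact poisson_key _ _ ha hb _ _
    rw [key, Finset.prod_mul_distrib, ih (by omega), prod_range_succ, mul_assoc]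


/-- Multiscale factorization of the Poisson likelihood (equation (4) for model (P)):
the joint pmf of `N = 2^J` independent Poissons factors as the Poisson pmf of the
total times a product of binomial pmfs of the left-child aggregates given the
parent aggregates, with success probabilities `ω_{j,k} = θ_{j+1,2k} / θ_{j,k}`. -/
theorem poisson_multiscale_factorization (J : ℕ) (θ : Fin (2 ^ J) → ℝ)
    (hθ : ∀ i, 0 < θ i) (x : Fin (2 ^ J) → ℕ) :
    ∏ i, (Real.exp (-θ i) * θ i ^ x i / (Nat.factorial (x i) : ℝ))
      = (Real.exp (-(dyadicAgg θ 0 0)) * (dyadicAgg θ 0 0) ^ (dyadicAgg x 0 0) /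
            (Nat.factorial (dyadicAgg x 0 0) : ℝ)) *
        ∏ j ∈ Finset.range J, ∏ k ∈ Finset.range (2 ^ j),
          ((Nat.choose (dyadicAgg x j k) (dyadicAgg x (j + 1) (2 * k)) : ℝ) *
            (dyadicAgg θ (j + 1) (2 * k) / dyadicAgg θ j k) ^
              (dyadicAgg x (j + 1) (2 * k)) *
            (1 - dyadicAgg θ (j + 1) (2 * k) / dyadicAgg θ j k) ^
              (dyadicAgg x j k - dyadicAgg x (j + 1) (2 * k))) := by
  rw [← main_ind J θ hθ x J le_rfl, ← Fin.prod_univ_eq_prod_range]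
  exact Finset.prod_congr rfl fun i _ => by rw [dyadicAgg_top, dyadicAgg_top]
end
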